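/- Let p, q > 1 with 1/p + 1/q = 1, and define h(t,u) = 1/(1-e^{-t}) - e^{-(u+1)pt}/(1-e^{-pt}) - e^{uqt}/(1-e^{-qt}). If -1 ≤ u ≤ 0, then h(t,u) > 0 for all t > 0. -/

import Mathlib

open Real

private lemma exp_ratio_mono {s A : ℝ} (hs : 0 < s) (hsA : s < A) :
    A * (Real.exp s - 1) < s * (Real.exp A - 1) := by
  have hA : (0:ℝ) < A := hs.trans hsA
  have hw1 : (0:ℝ) < 1 - s / A := by
    have : s / A < 1 := (div_lt_one hA).2 hsA
    linarith
  have hw2 : 0 < s / A := div_pos hs hA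
  have h := strictConvexOn_exp.2 (Set.mem_univ (0:ℝ)) (Set.mem_univ A)
    (ne_of_lt hA) hw1 hw2 (by ring)
  simp only [smul_eq_mul, mul_zero, zero_add, Real.exp_zero, mul_one] at h
  rw [div_mul_cancel₀ _ (ne_of_gt hA)] at h
  have h2 := mul_lt_mul_of_pos_left h hA
  have hAne : A ≠ 0 := ne_of_gt hA
  field_simp at h2
  nlinarith [h2]

private lemma exp_cc {x θ : ℝ} (h0 : 0 ≤ θ) (h1 : θ ≤ 1) :
    Real.exp (θ * x) ≤ θ * Real.exp x + (1 - θ) := by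
  have h := convexOn_exp.2 (Set.mem_univ x) (Set.mem_univ (0:ℝ)) h0
    (by linarith : (0:ℝ) ≤ 1 - θ) (by ring)
  simpa using h

theorem h_pos_of_u_between (p q : ℝ) (hp : 1 < p) (hq : 1 < q) (hpq : 1 / p + 1 / q = 1)
    (u : ℝ) (hu1 : -1 ≤ u) (hu0 : u ≤ 0) (t : ℝ) (ht : 0 < t) :
    1 / (1 - exp (-t)) - exp (-((u + 1) * p * t)) / (1 - exp (-(p * t)))
      - exp (u * q * t) / (1 - exp (-(q * t))) > 0 := by
  have hp0 : (0:ℝ) < p := by linarith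
  have hq0 : (0:ℝ) < q := by linarith
  have hpt : t < p * t := by nlinarith
  have hqt : t < q * t := by nlinarith
  have hT : 1 < Real.exp t := by simpa using Real.exp_lt_exp.2 ht
  have hP : 1 < Real.exp (p * t) := by simpa using Real.exp_lt_exp.2 (by positivity : 0 < p * t)
  have hQ : 1 < Real.exp (q * t) := by simpa using Real.exp_lt_exp.2 (by positivity : 0 < q * t)
  -- key inequality
  have hkp := exp_ratio_mono ht hpt
  have hkq := exp_ratio_mono ht hqt
  have hkp' : p * (Real.exp t - 1) < Real.exp (p * t) - 1 := by
    have := (mul_lt_mul_iff_of_pos_right ht).mp (by nlinarith [hkp] : (p * (Real.exp t - 1)) * t < (Real.exp (p * t) - 1) * t)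
    exact this
  have hkq' : q * (Real.exp t - 1) < Real.exp (q * t) - 1 := by
    have := (mul_lt_mul_iff_of_pos_right ht).mp (by nlinarith [hkq] : (q * (Real.exp t - 1)) * t < (Real.exp (q * t) - 1) * t)
    exact this
  have hT1 : 0 < Real.exp t - 1 := by linarith
  have hP1 : 0 < Real.exp (p * t) - 1 := by linarith
  have hQ1 : 0 < Real.exp (q * t) - 1 := by linarith
  have h1p : 1 / (Real.exp (p * t) - 1) < 1 / (p * (Real.exp t - 1)) :=
    one_div_lt_one_div_of_lt (by positivity) hkp'
  have h1q : 1 / (Real.exp (q * t) - 1) < 1 / (q * (Real.exp t - 1)) :=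
    one_div_lt_one_div_of_lt (by positivity) hkq'
  have hsum : 1 / (p * (Real.exp t - 1)) + 1 / (q * (Real.exp t - 1)) = 1 / (Real.exp t - 1) := by
    rw [one_div, one_div, one_div, mul_inv, mul_inv, ← add_mul, ← one_div, ← one_div, hpq, one_mul]
  have key : 1 / (Real.exp (p * t) - 1) + 1 / (Real.exp (q * t) - 1) < 1 / (Real.exp t - 1) := by
    linarith
  -- denominators
  have hdT : 0 < 1 - Real.exp (-t) := by
    have : Real.exp (-t) < 1 := by simpa using Real.exp_lt_exp.2 (by linarith : -t < 0)
    linarith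
  have hdP : 0 < 1 - Real.exp (-(p * t)) := by
    have : Real.exp (-(p * t)) < 1 := by
      simpa using Real.exp_lt_exp.2 (by nlinarith : -(p * t) < 0)
    linarith
  have hdQ : 0 < 1 - Real.exp (-(q * t)) := by
    have : Real.exp (-(q * t)) < 1 := by
      simpa using Real.exp_lt_exp.2 (by nlinarith : -(q * t) < 0)
    linarith
  -- numerator bounds via convexity of exp
  have hE2 : Real.exp (-((u + 1) * p * t)) ≤ (u + 1) * Real.exp (-(p * t)) + (-u) := by
    have h := exp_cc (x := -(p * t)) (θ := u + 1) (by linarith) (by linarith)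
    have : (u + 1) * -(p * t) = -((u + 1) * p * t) := by ring
    rw [this] at h
    linarith
  have hE3 : Real.exp (u * q * t) ≤ (-u) * Real.exp (-(q * t)) + (1 + u) := by
    have h := exp_cc (x := -(q * t)) (θ := -u) (by linarith) (by linarith)
    have : (-u) * -(q * t) = u * q * t := by ring
    rw [this] at h
    linarith
  -- fraction rewrites
  have f1 : 1 / (1 - Real.exp (-t)) = 1 + 1 / (Real.exp t - 1) := by
    rw [Real.exp_neg]
    field_simp
    ring
  have f2 : ((u + 1) * Real.exp (-(p * t)) + (-u)) / (1 - Real.exp (-(p * t)))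
      = 1 / (Real.exp (p * t) - 1) - u := by
    rw [Real.exp_neg]
    field_simp
    ring
  have f3 : ((-u) * Real.exp (-(q * t)) + (1 + u)) / (1 - Real.exp (-(q * t)))
      = 1 / (Real.exp (q * t) - 1) + (1 + u) := by
    rw [Real.exp_neg]
    field_simp
    ring
  have g2 : Real.exp (-((u + 1) * p * t)) / (1 - Real.exp (-(p * t)))
      ≤ 1 / (Real.exp (p * t) - 1) - u := by
    rw [← f2]
    gcongr
  have g3 : Real.exp (u * q * t) / (1 - Real.exp (-(q * t)))
      ≤ 1 / (Real.exp (q * t) - 1) + (1 + u) := by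
    rw [← f3]
    gcongr
  rw [f1] at *
  linarith
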